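/- There exists a (non–locally finite) tiling of a region of ℝ² by convex polygons in which some point is a vertex of exactly one tile. Concretely, the rectangle R with vertices (1,0), (−1,0), (−1,−1), (1,−1), the square S with vertices (0,0), (0,1), (−1,1), (−1,0), and the rectangles T_k with vertices (2^{−k},0), (2^{−k},1), (2^{−k−1},1), (2^{−k−1},0) for k ≥ 0, have pairwise disjoint interiors, their union is [−1,1]×[−1,1], and (0,0) is a vertex of S but of no other tile in this collection. -/

import Mathlib

open Set

noncomputable section

/-- The rectangle `R` with vertices `(1,0), (-1,0), (-1,-1), (1,-1)`. -/
def tileR : Set (ℝ × ℝ) :=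
  convexHull ℝ ({((1 : ℝ), (0 : ℝ)), (-1, 0), (-1, -1), (1, -1)} : Set (ℝ × ℝ))

/-- The square `S` with vertices `(0,0), (0,1), (-1,1), (-1,0)`. -/
def tileS : Set (ℝ × ℝ) :=
  convexHull ℝ ({((0 : ℝ), (0 : ℝ)), (0, 1), (-1, 1), (-1, 0)} : Set (ℝ × ℝ))

/-- The rectangle `T_k` with vertices `(2^{-k},0), (2^{-k},1), (2^{-k-1},1), (2^{-k-1},0)`. -/
def tileT (k : ℕ) : Set (ℝ × ℝ) :=
  convexHull ℝ ({(((1 : ℝ) / 2) ^ k, (0 : ℝ)), (((1 : ℝ) / 2) ^ k, 1),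
    (((1 : ℝ) / 2) ^ (k + 1), 1), (((1 : ℝ) / 2) ^ (k + 1), 0)} : Set (ℝ × ℝ))

/-- The whole (non–locally finite) collection of tiles. -/
def tiles : Set (Set (ℝ × ℝ)) := {tileR, tileS} ∪ Set.range tileT

lemma hull_rect (a b c d : ℝ) (hab : a ≤ b) (hcd : c ≤ d) :
    convexHull ℝ (({a, b} : Set ℝ) ×ˢ ({c, d} : Set ℝ)) = Icc a b ×ˢ Icc c d := by
  rw [convexHull_prod, convexHull_pair, convexHull_pair, segment_eq_Icc hab, segment_eq_Icc hcd]

lemma tileR_eq : tileR = Icc (-1 : ℝ) 1 ×ˢ Icc (-1 : ℝ) 0 := by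
  rw [tileR, show ({((1 : ℝ), (0 : ℝ)), (-1, 0), (-1, -1), (1, -1)} : Set (ℝ × ℝ)) =
    ({-1, 1} : Set ℝ) ×ˢ ({-1, 0} : Set ℝ) by ext ⟨x, y⟩; simp [Prod.ext_iff]; tauto]
  exact hull_rect _ _ _ _ (by norm_num) (by norm_num)

lemma tileS_eq : tileS = Icc (-1 : ℝ) 0 ×ˢ Icc (0 : ℝ) 1 := by
  rw [tileS, show ({((0 : ℝ), (0 : ℝ)), (0, 1), (-1, 1), (-1, 0)} : Set (ℝ × ℝ)) =
    ({-1, 0} : Set ℝ) ×ˢ ({0, 1} : Set ℝ) by ext ⟨x, y⟩; simp [Prod.ext_iff]; tauto]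
  exact hull_rect _ _ _ _ (by norm_num) (by norm_num)

lemma tileT_eq (k : ℕ) :
    tileT k = Icc (((1 : ℝ) / 2) ^ (k + 1)) (((1 : ℝ) / 2) ^ k) ×ˢ Icc (0 : ℝ) 1 := by
  rw [tileT, show ({(((1 : ℝ) / 2) ^ k, (0 : ℝ)), (((1 : ℝ) / 2) ^ k, 1),
      (((1 : ℝ) / 2) ^ (k + 1), 1), (((1 : ℝ) / 2) ^ (k + 1), 0)} : Set (ℝ × ℝ)) =
    ({((1 : ℝ) / 2) ^ (k + 1), ((1 : ℝ) / 2) ^ k} : Set ℝ) ×ˢ ({0, 1} : Set ℝ) by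
      ext ⟨x, y⟩; simp [Prod.ext_iff]; tauto]
  exact hull_rect _ _ _ _
    (pow_le_pow_of_le_one (by norm_num) (by norm_num) (Nat.le_succ k)) (by norm_num)

lemma pow_half_pos (k : ℕ) : (0 : ℝ) < ((1 : ℝ) / 2) ^ k := by positivity

lemma left_mem_extremePoints_Icc {a b : ℝ} (h : a ≤ b) :
    a ∈ extremePoints ℝ (Icc a b) := by
  refine ⟨left_mem_Icc.2 h, ?_⟩
  rintro x ⟨hx, -⟩ y ⟨hy, -⟩ ⟨s, t, hs, ht, hst, heq⟩
  simp only [smul_eq_mul] at heq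
  have ha : s * a + t * a = a := by rw [← add_mul, hst, one_mul]
  have h1 : t * a ≤ t * y := mul_le_mul_of_nonneg_left hy ht.le
  have h2 : s * a ≤ s * x := mul_le_mul_of_nonneg_left hx hs.le
  refine (?_ : x = a ∧ y = a).1
  constructor
  · have hle : s * x ≤ s * a := by linarith
    exact le_antisymm (le_of_mul_le_mul_left hle hs) hx
  · have hle : t * y ≤ t * a := by linarith
    exact le_antisymm (le_of_mul_le_mul_left hle ht) hy

lemma right_mem_extremePoints_Icc {a b : ℝ} (h : a ≤ b) :
    b ∈ extremePoints ℝ (Icc a b) := by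
  refine ⟨right_mem_Icc.2 h, ?_⟩
  rintro x ⟨-, hx⟩ y ⟨-, hy⟩ ⟨s, t, hs, ht, hst, heq⟩
  simp only [smul_eq_mul] at heq
  have hb : s * b + t * b = b := by rw [← add_mul, hst, one_mul]
  have h1 : t * y ≤ t * b := mul_le_mul_of_nonneg_left hy ht.le
  have h2 : s * x ≤ s * b := mul_le_mul_of_nonneg_left hx hs.le
  refine (?_ : x = b ∧ y = b).1
  constructor
  · have hle : s * b ≤ s * x := by linarith
    exact le_antisymm hx (le_of_mul_le_mul_left hle hs)
  · have hle : t * b ≤ t * y := by linarith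
    exact le_antisymm hy (le_of_mul_le_mul_left hle ht)

lemma iUnion_T_x : (⋃ k, Icc (((1 : ℝ) / 2) ^ (k + 1)) (((1 : ℝ) / 2) ^ k)) = Ioc (0 : ℝ) 1 := by
  ext x
  simp only [mem_iUnion, mem_Icc, mem_Ioc]
  constructor
  · rintro ⟨k, h1, h2⟩
    exact ⟨lt_of_lt_of_le (pow_half_pos (k + 1)) h1,
      h2.trans (pow_le_one₀ (by norm_num) (by norm_num))⟩
  · rintro ⟨hx, hx1⟩
    have hex : ∃ n : ℕ, ((1 : ℝ) / 2) ^ (n + 1) < x := by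
      obtain ⟨n, hn⟩ := exists_pow_lt_of_lt_one hx (by norm_num : (1 : ℝ) / 2 < 1)
      exact ⟨n, lt_of_le_of_lt (pow_le_pow_of_le_one (by norm_num) (by norm_num)
        (Nat.le_succ n)) hn⟩
    classical
    refine ⟨Nat.find hex, (Nat.find_spec hex).le, ?_⟩
    rcases Nat.eq_zero_or_pos (Nat.find hex) with h0 | h0
    · rw [h0]; simpa using hx1
    · have hm := Nat.find_min hex (m := Nat.find hex - 1) (by omega)
      push_neg at hm
      have h2 : Nat.find hex - 1 + 1 = Nat.find hex := by omega
      rwa [h2] at hm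

lemma mem_tiles (A : Set (ℝ × ℝ)) (hA : A ∈ tiles) :
    A = tileR ∨ A = tileS ∨ ∃ k, A = tileT k := by
  rcases hA with (h | h) | ⟨k, hk⟩
  · exact Or.inl h
  · exact Or.inr (Or.inl h)
  · exact Or.inr (Or.inr ⟨k, hk.symm⟩)

lemma intR : interior tileR = Ioo (-1 : ℝ) 1 ×ˢ Ioo (-1 : ℝ) 0 := by
  rw [tileR_eq, interior_prod_eq, interior_Icc, interior_Icc]

lemma intS : interior tileS = Ioo (-1 : ℝ) 0 ×ˢ Ioo (0 : ℝ) 1 := by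
  rw [tileS_eq, interior_prod_eq, interior_Icc, interior_Icc]

lemma intT (k : ℕ) : interior (tileT k) =
    Ioo (((1 : ℝ) / 2) ^ (k + 1)) (((1 : ℝ) / 2) ^ k) ×ˢ Ioo (0 : ℝ) 1 := by
  rw [tileT_eq, interior_prod_eq, interior_Icc, interior_Icc]

lemma disjRS : interior tileR ∩ interior tileS = ∅ := by
  rw [intR, intS]; ext ⟨x, y⟩
  simp only [mem_inter_iff, mem_prod, mem_Ioo, mem_empty_iff_false, iff_false]
  rintro ⟨⟨-, -, hy⟩, -, hy', -⟩; linarith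

lemma disjRT (k : ℕ) : interior tileR ∩ interior (tileT k) = ∅ := by
  rw [intR, intT]; ext ⟨x, y⟩
  simp only [mem_inter_iff, mem_prod, mem_Ioo, mem_empty_iff_false, iff_false]
  rintro ⟨⟨-, -, hy⟩, -, hy', -⟩; linarith

lemma disjST (k : ℕ) : interior tileS ∩ interior (tileT k) = ∅ := by
  rw [intS, intT]; ext ⟨x, y⟩
  simp only [mem_inter_iff, mem_prod, mem_Ioo, mem_empty_iff_false, iff_false]
  rintro ⟨⟨⟨-, hx⟩, -⟩, ⟨hx', -⟩, -⟩
  exact absurd (hx'.trans hx) (not_lt.2 (pow_half_pos (k + 1)).le)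

lemma disjTT {j k : ℕ} (h : j ≠ k) : interior (tileT j) ∩ interior (tileT k) = ∅ := by
  wlog hjk : j < k generalizing j k
  · rw [inter_comm]; exact this h.symm (by omega)
  rw [intT, intT]; ext ⟨x, y⟩
  simp only [mem_inter_iff, mem_prod, mem_Ioo, mem_empty_iff_false, iff_false]
  rintro ⟨⟨⟨hj1, hj2⟩, -⟩, ⟨hk1, hk2⟩, -⟩
  have : ((1 : ℝ) / 2) ^ k ≤ ((1 : ℝ) / 2) ^ (j + 1) :=
    pow_le_pow_of_le_one (by norm_num) (by norm_num) (by omega)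
  linarith

/-- A non–locally finite tiling of `[-1,1] × [-1,1]` by convex polygons in which the
point `(0,0)` is a vertex of exactly one tile (namely, of `tileS`): the tiles have
pairwise disjoint interiors, their union is `[-1,1] × [-1,1]`, and `(0,0)` is an
extreme point of `tileS` but of no other tile. -/
theorem lonely_vertex_non_locally_finite :
    (∀ A ∈ tiles, ∀ B ∈ tiles, A ≠ B → interior A ∩ interior B = ∅) ∧
    ⋃₀ tiles = Set.Icc ((-1 : ℝ), (-1 : ℝ)) ((1 : ℝ), (1 : ℝ)) ∧
    ((0 : ℝ), (0 : ℝ)) ∈ extremePoints ℝ tileS ∧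
    ∀ A ∈ tiles, A ≠ tileS → ((0 : ℝ), (0 : ℝ)) ∉ extremePoints ℝ A := by
  refine ⟨?_, ?_, ?_, ?_⟩
  · intro A hA B hB hAB
    rcases mem_tiles A hA with rfl | rfl | ⟨j, rfl⟩ <;>
      rcases mem_tiles B hB with rfl | rfl | ⟨k, rfl⟩
    · exact absurd rfl hAB
    · exact disjRS
    · exact disjRT k
    · rw [inter_comm]; exact disjRS
    · exact absurd rfl hAB
    · exact disjST k
    · rw [inter_comm]; exact disjRT j
    · rw [inter_comm]; exact disjST j
    · exact disjTT (fun h => hAB (by rw [h]))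
  · have : ⋃₀ tiles = tileR ∪ tileS ∪ ⋃ k, tileT k := by
      rw [tiles, sUnion_union, sUnion_pair, sUnion_range]
    rw [this, tileR_eq, tileS_eq]
    have hT : (⋃ k, tileT k) = Ioc (0 : ℝ) 1 ×ˢ Icc (0 : ℝ) 1 := by
      simp_rw [tileT_eq, ← iUnion_prod_const, iUnion_T_x]
    rw [hT, Set.Icc_prod_eq]
    ext ⟨x, y⟩
    simp only [mem_union, mem_prod, mem_Icc, mem_Ioc]
    constructor
    · rintro ((⟨⟨h1, h2⟩, h3, h4⟩ | ⟨⟨h1, h2⟩, h3, h4⟩) | ⟨⟨h1, h2⟩, h3, h4⟩) <;>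
        constructor <;> constructor <;> linarith
    · rintro ⟨⟨h1, h2⟩, h3, h4⟩
      rcases le_or_gt y 0 with hy | hy
      · exact Or.inl (Or.inl ⟨⟨h1, h2⟩, h3, hy⟩)
      · rcases le_or_gt x 0 with hx | hx
        · exact Or.inl (Or.inr ⟨⟨h1, hx⟩, hy.le, h4⟩)
        · exact Or.inr ⟨⟨hx, h2⟩, hy.le, h4⟩
  · rw [tileS_eq, extremePoints_prod]
    exact ⟨right_mem_extremePoints_Icc (by norm_num),
      left_mem_extremePoints_Icc (by norm_num)⟩
  · intro A hA hAS
    rcases mem_tiles A hA with rfl | rfl | ⟨k, rfl⟩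
    · rw [tileR_eq, extremePoints_prod]
      rintro ⟨hx, -⟩
      have := hx.2 (x₁ := -1) ⟨by norm_num, by norm_num⟩ (x₂ := 1) ⟨by norm_num, by norm_num⟩
        ⟨1/2, 1/2, by norm_num, by norm_num, by norm_num, by norm_num⟩
      norm_num at this
    · exact absurd rfl hAS
    · intro hx
      have := hx.1
      rw [tileT_eq] at this
      exact absurd this.1.1 (not_le.2 (pow_half_pos (k + 1)))
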